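/- Let T > 0, η, λ, σ > 0 and x₀ > 0. Let (Ω, F, P) be a probability space carrying a standard Brownian motion W : [0,T] × Ω → ℝ with continuous sample paths. For each N ∈ ℕ (N ≥ 1) define the Euler approximation Y^N_0 := x₀ and Y^N_{k+1} := Y^N_k + (T/N)·((η + σ²/2)·Y^N_k − λ·(Y^N_k)²) + σ·Y^N_k·(W_{(k+1)T/N} − W_{kT/N}) for k = 0, 1, …, N−1. Then lim_{N → ∞} E[|Y^N_N|^p] = ∞ for every p ∈ [1, ∞). -/

import Mathlib

open MeasureTheory ProbabilityTheory Filter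

/-- `W` is a standard Brownian motion on the time interval `[0, T]` with
continuous sample paths: each `W t` is measurable, `W 0 = 0`, the sample paths
are continuous on `[0, T]`, the increment `W t - W s` is centered Gaussian with
variance `t - s` for `0 ≤ s ≤ t ≤ T`, and increments over disjoint consecutive
time intervals are independent. -/
def IsStandardBrownianMotion {Ω : Type*} [MeasurableSpace Ω] (P : Measure Ω)
    (T : ℝ) (W : ℝ → Ω → ℝ) : Prop :=
  (∀ t, t ∈ Set.Icc 0 T → Measurable (W t)) ∧
  (∀ ω, W 0 ω = 0) ∧
  (∀ ω, ContinuousOn (fun t => W t ω) (Set.Icc 0 T)) ∧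
  (∀ s t : ℝ, 0 ≤ s → s ≤ t → t ≤ T →
    Measure.map (fun ω => W t ω - W s ω) P = gaussianReal 0 (Real.toNNReal (t - s))) ∧
  (∀ (n : ℕ) (t : Fin (n + 1) → ℝ), Monotone t → (∀ i, t i ∈ Set.Icc 0 T) →
    iIndepFun
      (fun (i : Fin n) => fun ω => W (t i.succ) ω - W (t i.castSucc) ω) P)

section
open scoped NNReal ENNReal

set_option maxHeartbeats 1000000

namespace Stmt18Aux


lemma gauss_Icc_lower {v : ℝ≥0} (hv : v ≠ 0) {a b c : ℝ} (hc0 : 0 ≤ c)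
    (hc : ∀ x ∈ Set.Icc a b, c ≤ gaussianPDFReal 0 v x) :
    ENNReal.ofReal (c * (b - a)) ≤ gaussianReal 0 v (Set.Icc a b) := by
  rw [gaussianReal_apply 0 hv]
  have h1 : ENNReal.ofReal (c * (b - a)) ≤ ∫⁻ x in Set.Icc a b, ENNReal.ofReal c := by
    rw [setLIntegral_const, Real.volume_Icc, ← ENNReal.ofReal_mul hc0]
  exact h1.trans (setLIntegral_mono (measurable_gaussianPDF 0 v)
    fun x hx => ENNReal.ofReal_le_ofReal (hc x hx))

/-- Lower bound for the upper tail of a centered Gaussian. -/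
lemma gauss_Ici_lower {v : ℝ≥0} (hv : v ≠ 0) {r : ℝ} (hr : 0 ≤ r) :
    ENNReal.ofReal ((Real.sqrt (2 * Real.pi * v))⁻¹
        * Real.exp (-(r + 1) ^ 2 / (2 * v))) ≤ gaussianReal 0 v (Set.Ici r) := by
  have hv0 : (0:ℝ) < (v:ℝ) := by positivity
  have hsub : Set.Icc r (r + 1) ⊆ Set.Ici r := fun x hx => hx.1
  refine le_trans ?_ (measure_mono hsub)
  have key := gauss_Icc_lower (a := r) (b := r + 1) hv
    (c := (Real.sqrt (2 * Real.pi * v))⁻¹ * Real.exp (-(r + 1) ^ 2 / (2 * v)))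
    (by positivity) ?_
  · simpa using key
  · intro x hx
    unfold gaussianPDFReal
    have h2v : (0:ℝ) < 2 * (v:ℝ) := by positivity
    refine mul_le_mul_of_nonneg_left (Real.exp_le_exp.mpr ?_) (by positivity)
    rw [div_le_div_iff_of_pos_right h2v]
    have := hx.1; have := hx.2
    nlinarith

/-- Lower bound for the central part of a centered Gaussian with small variance. -/
lemma gauss_Icc11_lower {v : ℝ≥0} (hv : v ≠ 0) (hv1 : (v:ℝ) ≤ 1) :
    ENNReal.ofReal (Real.exp (-2⁻¹) / Real.sqrt (2 * Real.pi))
      ≤ gaussianReal 0 v (Set.Icc (-1) 1) := by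
  have hv0 : (0:ℝ) < (v:ℝ) := by positivity
  have hsqv : (0:ℝ) < Real.sqrt v := Real.sqrt_pos.mpr hv0
  have hsub : Set.Icc 0 (Real.sqrt v) ⊆ Set.Icc (-1:ℝ) 1 := by
    intro x hx
    constructor
    · linarith [hx.1]
    · exact hx.2.trans ((Real.sqrt_le_one).mpr hv1)
  refine le_trans ?_ (measure_mono hsub)
  have key := gauss_Icc_lower (a := 0) (b := Real.sqrt v) hv
    (c := (Real.sqrt (2 * Real.pi * v))⁻¹ * Real.exp (-2⁻¹)) (by positivity) ?_
  · refine le_trans (le_of_eq ?_) key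
    congr 1
    rw [show 2 * Real.pi * (v:ℝ) = 2 * Real.pi * (v:ℝ) from rfl, Real.sqrt_mul (by positivity) (v:ℝ)]
    rw [sub_zero]
    field_simp
  · intro x hx
    unfold gaussianPDFReal
    have h2v : (0:ℝ) < 2 * (v:ℝ) := by positivity
    refine mul_le_mul_of_nonneg_left (Real.exp_le_exp.mpr ?_) (by positivity)
    have hx2 : (x - 0)^2 ≤ (v:ℝ) := by
      rw [sub_zero, ← Real.sq_sqrt hv0.le]
      have := hx.1; have := hx.2
      nlinarith
    rw [neg_div, neg_le_neg_iff, div_le_iff₀ h2v]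
    nlinarith



lemma det_growth {a D : ℝ} (ha : 0 < a) (ha1 : a ≤ 1) (hD : 1 ≤ D) {N : ℕ} (hN : 1 ≤ N)
    {y : ℕ → ℝ}
    (hrec : ∀ k, 1 ≤ k → k < N → 2 * a * (y k) ^ 2 - D * |y k| ≤ |y (k + 1)|)
    (hstart : max D 2 ≤ a * |y 1|) :
    (a * |y 1|) ^ (2 ^ (N - 1)) ≤ |y N| := by
  set u := a * |y 1| with hu
  have hu2 : 2 ≤ u := le_trans (le_max_right _ _) hstart
  have huD : D ≤ u := le_trans (le_max_left _ _) hstart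
  have hu1 : (1:ℝ) ≤ u := by linarith
  have main : ∀ k, 1 ≤ k → k ≤ N → u ^ (2 ^ (k - 1)) ≤ a * |y k| := by
    intro k
    induction k with
    | zero => intro h; exact absurd h (by norm_num)
    | succ k ih =>
      intro _ hkN
      rcases Nat.eq_zero_or_pos k with hk0 | hk1
      · subst hk0; simpa using le_of_eq hu.symm
      · have hkN' : k < N := Nat.lt_of_succ_le hkN
        have huk : u ^ (2 ^ (k - 1)) ≤ a * |y k| := ih hk1 hkN'.le
        have hupow1 : u ≤ u ^ (2 ^ (k - 1)) := le_self_pow₀ hu1 (by positivity)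
        have hwD : D ≤ a * |y k| := le_trans huD (hupow1.trans huk)
        have hw0 : (0:ℝ) ≤ a * |y k| := by linarith
        have h1 : (a * |y k|) ^ 2 ≤ a * |y (k + 1)| := by
          have h2 := mul_le_mul_of_nonneg_left (hrec k hk1 hkN') ha.le
          have h3 : a * (2 * a * (y k) ^ 2 - D * |y k|)
              = 2 * (a * |y k|) ^ 2 - D * (a * |y k|) := by
            rw [mul_pow, sq_abs]; ring
          rw [h3] at h2
          nlinarith [h2, mul_nonneg (sub_nonneg.mpr hwD) hw0]
        have h2 : u ^ (2 ^ ((k + 1) - 1)) = (u ^ (2 ^ (k - 1))) ^ 2 := by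
          rw [← pow_mul]
          congr 1
          rw [Nat.succ_sub_one]
          conv_lhs => rw [← Nat.sub_add_cancel hk1]
          rw [pow_succ]
        rw [h2]
        exact le_trans (pow_le_pow_left₀ (by positivity) huk 2) h1
  have := main N hN le_rfl
  calc u ^ (2 ^ (N - 1)) ≤ a * |y N| := this
    _ ≤ 1 * |y N| := mul_le_mul_of_nonneg_right ha1 (abs_nonneg _)
    _ = |y N| := one_mul _



lemma F_tendsto {T : ℝ} (hT : 0 < T) :
    Tendsto (fun N : ℕ => Real.exp ((N:ℝ)/8 * 2^(N-1))
      * ((Real.sqrt (2*Real.pi*T))⁻¹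
        * Real.exp (-(2*Real.exp ((N:ℝ)/2)*(N:ℝ)/T) - 2*(N:ℝ)))) atTop atTop := by
  have hC₀ : 0 < (Real.sqrt (2*Real.pi*T))⁻¹ := by positivity
  have hg : Tendsto (fun N : ℕ => (N:ℝ)/8 * 2^(N-1)
      + (-(2*Real.exp ((N:ℝ)/2)*(N:ℝ)/T) - 2*(N:ℝ))) atTop atTop := by
    refine tendsto_atTop_mono' atTop ?_ tendsto_natCast_atTop_atTop
    -- eventually N ≤ g N
    have hlog : (1:ℝ)/2 < Real.log 2 := by
      have he : Real.exp (1/2) * Real.exp (1/2) = Real.exp 1 := by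
        rw [← Real.exp_add]; norm_num
      have h2 : Real.exp (1/2) < 2 := by
        nlinarith [Real.exp_one_lt_d9, Real.exp_pos (1/2 : ℝ)]
      exact (Real.lt_log_iff_exp_lt two_pos).mpr h2
    have h1 : Tendsto (fun N : ℕ => Real.exp ((N:ℝ)*(Real.log 2 - 1/2))) atTop atTop :=
      Real.tendsto_exp_atTop.comp (tendsto_natCast_atTop_atTop.atTop_mul_const (by linarith))
    filter_upwards [h1.eventually_ge_atTop (16*(2/T+3)), eventually_ge_atTop 1] with N hN1 hN2
    have hN0 : (0:ℝ) ≤ (N:ℝ) := Nat.cast_nonneg N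
    have hexp1 : (1:ℝ) ≤ Real.exp ((N:ℝ)/2) := Real.one_le_exp (by positivity)
    have hpow : (2:ℝ)^(N-1) = Real.exp ((N:ℝ)*(Real.log 2 - 1/2)) * Real.exp ((N:ℝ)/2) / 2 := by
      rw [← Real.exp_add]
      have : (N:ℝ)*(Real.log 2 - 1/2) + (N:ℝ)/2 = (N:ℝ)*Real.log 2 := by ring
      rw [this, Real.exp_nat_mul, Real.exp_log two_pos]
      have h2 : (2:ℝ)^N = 2^(N-1)*2 := by
        conv_lhs => rw [← Nat.sub_add_cancel hN2]
        rw [pow_succ]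
      rw [h2]; ring
    -- claim: 2*exp(N/2)/T + 3 ≤ 2^(N-1)/8
    have hclaim : 2*Real.exp ((N:ℝ)/2)/T + 3 ≤ (2:ℝ)^(N-1)/8 := by
      rw [hpow]
      have := mul_le_mul_of_nonneg_right hN1 (Real.exp_nonneg ((N:ℝ)/2))
      have h3 : (16*(2/T+3))*Real.exp ((N:ℝ)/2)
          = 16*(2*Real.exp ((N:ℝ)/2)/T) + 48*Real.exp ((N:ℝ)/2) := by
        field_simp; ring
      nlinarith [Real.exp_pos ((N:ℝ)/2), div_nonneg (mul_nonneg (by norm_num : (0:ℝ) ≤ 2) (Real.exp_nonneg ((N:ℝ)/2))) hT.le]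
    have := mul_le_mul_of_nonneg_left hclaim hN0
    have hexpand : (N:ℝ) * (2*Real.exp ((N:ℝ)/2)/T + 3)
        = 2*Real.exp ((N:ℝ)/2)*(N:ℝ)/T + 3*(N:ℝ) := by ring
    nlinarith []
  have heq : (fun N : ℕ => Real.exp ((N:ℝ)/8 * 2^(N-1))
      * ((Real.sqrt (2*Real.pi*T))⁻¹
        * Real.exp (-(2*Real.exp ((N:ℝ)/2)*(N:ℝ)/T) - 2*(N:ℝ))))
      = fun N : ℕ => (Real.sqrt (2*Real.pi*T))⁻¹
        * Real.exp ((N:ℝ)/8 * 2^(N-1) + (-(2*Real.exp ((N:ℝ)/2)*(N:ℝ)/T) - 2*(N:ℝ))) := by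
    funext N; rw [Real.exp_add]; ring
  rw [heq]
  exact (Real.tendsto_exp_atTop.comp hg).const_mul_atTop hC₀



lemma pathwise (T lam σ x₀ c : ℝ) (hT : 0 < T) (hlam : 0 < lam) (hσ : 0 < σ)
    (hx₀ : 0 < x₀) (hc : 0 < c)
    (N : ℕ) (hN1 : 1 ≤ N) (p r : ℝ) (hp : 1 ≤ p) (hr1 : 1 ≤ r)
    (hTN : T ≤ (N:ℝ))
    (hev3 : 2*(1 + T*(c + lam*x₀)) ≤ σ * r)
    (hev5 : Real.exp ((N:ℝ)/8) ≤ T*lam*σ*x₀/(4*(N:ℝ)) * r)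
    (hev6 : max (1 + T*c + σ) 2 ≤ Real.exp ((N:ℝ)/8))
    (hev7 : T*lam/2 ≤ (N:ℝ))
    (y : ℕ → ℝ) (d : ℕ → ℝ)
    (hy0 : y 0 = x₀)
    (hyrec : ∀ k, k < N → y (k+1) = y k + (T/(N:ℝ))*(c*y k - lam*(y k)^2) + σ * y k * d k)
    (hd0 : r ≤ d 0)
    (hdk : ∀ k, 1 ≤ k → k < N → |d k| ≤ 1) :
    Real.exp ((N:ℝ)/8 * 2^(N-1)) ≤ |y N| ^ p := by
  have hN0 : (0:ℝ) < (N:ℝ) := by exact_mod_cast Nat.pos_of_ne_zero (by omega)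
  have hN1' : (1:ℝ) ≤ (N:ℝ) := by exact_mod_cast hN1
  have hh0 : (0:ℝ) < T / N := by positivity
  have hhT : T / N ≤ T := by
    rw [div_le_iff₀ hN0]
    have h := mul_le_mul_of_nonneg_left hN1' hT.le
    linarith only [h]
  set a : ℝ := T*lam/(2*(N:ℝ)) with ha_def
  have ha : 0 < a := by positivity
  have ha1 : a ≤ 1 := by
    rw [ha_def, div_le_one (by positivity)]; linarith only [hev7]
  have hD1 : (1:ℝ) ≤ 1 + T*c + σ := by
    linarith only [mul_nonneg hT.le hc.le, hσ.le]
  have hrec' : ∀ k, 1 ≤ k → k < N →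
      2*a*(y k)^2 - (1+T*c+σ)*|y k| ≤ |y (k+1)| := by
    intro k hk1 hkN
    have hd := hdk k hk1 hkN
    have hdle := abs_le.mp hd
    have hEq : y (k+1) = y k * (1 + (T/N)*c + σ*(d k)) - 2*a*(y k)^2 := by
      rw [hyrec k hkN, ha_def]; ring
    have habs : |1 + (T/N)*c + σ*(d k)| ≤ 1 + T*c + σ := by
      have hTc : (T/N)*c ≤ T*c := mul_le_mul_of_nonneg_right hhT hc.le
      have hTc0 : 0 ≤ (T/N)*c := by positivity
      have hσd1 : σ*(d k) ≤ σ*1 := mul_le_mul_of_nonneg_left hdle.2 hσ.le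
      have hσd2 : σ*(-1) ≤ σ*(d k) := mul_le_mul_of_nonneg_left hdle.1 hσ.le
      have hTc1 : (0:ℝ) ≤ T*c := mul_nonneg hT.le hc.le
      rw [abs_le]
      constructor
      · linarith only [hσd2, hTc0, hTc1, hσ.le]
      · linarith only [hσd1, hTc, hTc0, hσ.le]
    have hB : |y k * (1 + (T/N)*c + σ*(d k))| ≤ (1+T*c+σ) * |y k| := by
      rw [abs_mul, mul_comm]
      exact mul_le_mul_of_nonneg_right habs (abs_nonneg _)
    have h2a : (0:ℝ) ≤ 2*a*(y k)^2 := by positivity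
    calc 2*a*(y k)^2 - (1+T*c+σ)*|y k|
        ≤ |2*a*(y k)^2| - |y k * (1 + (T/N)*c + σ*(d k))| := by
          rw [abs_of_nonneg h2a]; linarith
      _ ≤ |2*a*(y k)^2 - y k * (1 + (T/N)*c + σ*(d k))| := abs_sub_abs_le_abs_sub _ _
      _ = |y (k+1)| := by rw [hEq, abs_sub_comm]
  have hY1 : σ*x₀*r/2 ≤ y 1 := by
    have hEq1 : y 1 = x₀ + (T/N)*(c*x₀ - lam*x₀^2) + σ*x₀*(d 0) := by
      have := hyrec 0 (by omega)
      rw [hy0] at this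
      simpa using this
    have e2 : σ*x₀*r ≤ σ*x₀*(d 0) := mul_le_mul_of_nonneg_left hd0 (by positivity)
    have e1 : -(T*(c+lam*x₀)*x₀) ≤ (T/N)*(c*x₀ - lam*x₀^2) := by
      have k1 : (T/N)*(lam*x₀^2) ≤ T*(lam*x₀^2) :=
        mul_le_mul_of_nonneg_right hhT (by positivity)
      have k2 : (0:ℝ) ≤ (T/N)*(c*x₀) := by positivity
      have k3 : (0:ℝ) ≤ T*(c*x₀) := mul_nonneg hT.le (mul_nonneg hc.le hx₀.le)
      linarith only [k1, k2, k3]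
    have e3 := mul_le_mul_of_nonneg_left hev3 hx₀.le
    rw [hEq1]
    linarith only [e1, e2, e3, hx₀]
  have hm : Real.exp ((N:ℝ)/8) ≤ a * (σ*x₀*r/2) := by
    have hid : a * (σ*x₀*r/2) = T*lam*σ*x₀/(4*(N:ℝ)) * r := by
      rw [ha_def]; ring
    rw [hid]; exact hev5
  have hm2 : Real.exp ((N:ℝ)/8) ≤ a * |y 1| := by
    refine le_trans hm (le_trans (mul_le_mul_of_nonneg_left hY1 ha.le) ?_)
    exact mul_le_mul_of_nonneg_left (le_abs_self _) ha.le
  have hstart : max (1+T*c+σ) 2 ≤ a * |y 1| := le_trans hev6 hm2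
  have hdg := det_growth ha ha1 hD1 hN1 hrec' hstart
  have hpow : Real.exp ((N:ℝ)/8 * 2^(N-1)) ≤ (a*|y 1|)^(2^(N-1)) := by
    have h1 : Real.exp ((N:ℝ)/8)^(2^(N-1)) ≤ (a*|y 1|)^(2^(N-1)) :=
      pow_le_pow_left₀ (Real.exp_nonneg _) hm2 _
    refine le_trans (le_of_eq ?_) h1
    rw [← Real.exp_nat_mul]
    congr 1; push_cast; ring
  have hYN : Real.exp ((N:ℝ)/8 * 2^(N-1)) ≤ |y N| := le_trans hpow hdg
  have hE1 : (1:ℝ) ≤ Real.exp ((N:ℝ)/8 * 2^(N-1)) := Real.one_le_exp (by positivity)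
  calc Real.exp ((N:ℝ)/8 * 2^(N-1)) ≤ |y N| := hYN
    _ = |y N| ^ (1:ℝ) := (Real.rpow_one _).symm
    _ ≤ |y N| ^ p := Real.rpow_le_rpow_of_exponent_le (le_trans hE1 hYN) hp


section MainBound

variable {Ω : Type*} [MeasurableSpace Ω] (P : Measure Ω) [IsProbabilityMeasure P]

lemma main_bound
    (T : ℝ) (hT : 0 < T)
    (η lam σ : ℝ) (hη : 0 < η) (hlam : 0 < lam) (hσ : 0 < σ) (x₀ : ℝ) (hx₀ : 0 < x₀)
    (W : ℝ → Ω → ℝ)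
    (hWmeas : ∀ t, t ∈ Set.Icc 0 T → Measurable (W t))
    (hWmap : ∀ s t : ℝ, 0 ≤ s → s ≤ t → t ≤ T →
      Measure.map (fun ω => W t ω - W s ω) P = gaussianReal 0 (Real.toNNReal (t - s)))
    (hWind : ∀ (n : ℕ) (t : Fin (n + 1) → ℝ), Monotone t → (∀ i, t i ∈ Set.Icc 0 T) →
      iIndepFun
        (fun (i : Fin n) => fun ω => W (t i.succ) ω - W (t i.castSucc) ω) P)
    (Y : ℕ → ℕ → Ω → ℝ)
    (hY0 : ∀ N, 1 ≤ N → ∀ ω, Y N 0 ω = x₀)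
    (hYrec : ∀ N, 1 ≤ N → ∀ k < N, ∀ ω,
      Y N (k + 1) ω = Y N k ω + (T / N) * ((η + σ ^ 2 / 2) * Y N k ω - lam * (Y N k ω) ^ 2)
        + σ * Y N k ω * (W (((k : ℝ) + 1) * T / N) ω - W ((k : ℝ) * T / N) ω))
    (p : ℝ) (hp : 1 ≤ p)
    (N : ℕ) (hN1 : 1 ≤ N) (hTN : T ≤ (N:ℝ))
    (hev3 : 2*(1 + T*((η + σ^2/2) + lam*x₀)) ≤ σ * Real.exp ((N:ℝ)/4))
    (hev5 : Real.exp ((N:ℝ)/8) ≤ T*lam*σ*x₀/(4*(N:ℝ)) * Real.exp ((N:ℝ)/4))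
    (hev6 : max (1 + T*(η + σ^2/2) + σ) 2 ≤ Real.exp ((N:ℝ)/8))
    (hev7 : T*lam/2 ≤ (N:ℝ)) :
    ENNReal.ofReal (Real.exp ((N:ℝ)/8 * 2^(N-1))
      * ((Real.sqrt (2*Real.pi*T))⁻¹
        * Real.exp (-(2*Real.exp ((N:ℝ)/2)*(N:ℝ)/T) - 2*(N:ℝ))))
      ≤ ∫⁻ ω, ENNReal.ofReal (|Y N N ω| ^ p) ∂P := by
  have hN0 : (0:ℝ) < (N:ℝ) := by exact_mod_cast Nat.pos_of_ne_zero (by omega)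
  have hN1' : (1:ℝ) ≤ (N:ℝ) := by exact_mod_cast hN1
  set c : ℝ := η + σ^2/2 with hc_def
  have hc : 0 < c := by positivity
  set r : ℝ := Real.exp ((N:ℝ)/4) with hr_def
  have hr1 : (1:ℝ) ≤ r := Real.one_le_exp (by positivity)
  have hh0 : (0:ℝ) < T / N := by positivity
  have hhT : T / N ≤ T := by
    rw [div_le_iff₀ hN0]; nlinarith [hN1']
  have hh1 : T / N ≤ 1 := by
    rw [div_le_one hN0]; exact hTN
  set v : ℝ≥0 := Real.toNNReal (T/N) with hv_def
  have hv : v ≠ 0 := by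
    simp only [hv_def, ne_eq, Real.toNNReal_eq_zero, not_le]; exact hh0
  have hvv : (v:ℝ) = T/N := Real.coe_toNNReal _ hh0.le
  -- grid points are in [0,T]
  have hgrid : ∀ x : ℝ, 0 ≤ x → x ≤ (N:ℝ) → x * T / N ∈ Set.Icc (0:ℝ) T := by
    intro x hx0 hxN
    constructor
    · positivity
    · rw [div_le_iff₀ hN0]; nlinarith
  -- the increments
  set Δ : Fin N → Ω → ℝ :=
    fun i => fun ω => W ((((i:ℕ):ℝ) + 1) * T / N) ω - W (((i:ℕ):ℝ) * T / N) ω with hΔ_def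
  have hΔmeas : ∀ i : Fin N, Measurable (Δ i) := by
    intro i
    have h1 : (((i:ℕ):ℝ)+1) * T / N ∈ Set.Icc (0:ℝ) T := by
      apply hgrid _ (by positivity)
      have := i.is_lt
      exact_mod_cast Nat.succ_le_of_lt this
    have h2 : ((i:ℕ):ℝ) * T / N ∈ Set.Icc (0:ℝ) T := by
      apply hgrid _ (by positivity)
      exact_mod_cast i.is_lt.le
    exact (hWmeas _ h1).sub (hWmeas _ h2)
  -- target sets
  set S : Fin N → Set ℝ := fun i => if (i:ℕ) = 0 then Set.Ici r else Set.Icc (-1) 1 with hS_def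
  have hSmeas : ∀ i : Fin N, MeasurableSet (S i) := by
    intro i
    simp only [hS_def]
    split
    · exact measurableSet_Ici
    · exact measurableSet_Icc
  set A : Set Ω := ⋂ i : Fin N, Δ i ⁻¹' S i with hA_def
  have hAmeas : MeasurableSet A :=
    MeasurableSet.iInter fun i => (hΔmeas i) (hSmeas i)
  -- independence
  have hPA : P A = ∏ i : Fin N, P (Δ i ⁻¹' S i) := by
    have hmono : Monotone (fun i : Fin (N+1) => ((i:ℕ):ℝ) * T / N) := by
      intro i j hij
      have : ((i:ℕ):ℝ) ≤ ((j:ℕ):ℝ) := by exact_mod_cast hij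
      have h2 : (0:ℝ) ≤ T / N := hh0.le
      simp only [mul_div_assoc]
      exact mul_le_mul_of_nonneg_right this h2
    have hmem : ∀ i : Fin (N+1), ((i:ℕ):ℝ) * T / N ∈ Set.Icc (0:ℝ) T := by
      intro i
      apply hgrid _ (by positivity)
      exact_mod_cast Nat.lt_succ_iff.mp i.is_lt
    have hInd := hWind N _ hmono hmem
    have hfun : (fun (i : Fin N) => fun ω =>
        W ((((i.succ : Fin (N+1)):ℕ):ℝ) * T / N) ω - W ((((i.castSucc : Fin (N+1)):ℕ):ℝ) * T / N) ω)
        = Δ := by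
      funext i ω
      simp only [hΔ_def, Fin.val_succ, Fin.coe_castSucc, Nat.cast_add, Nat.cast_one]
    rw [hfun] at hInd
    exact hInd.meas_iInter (fun i => ⟨S i, hSmeas i, rfl⟩)
  -- marginals
  have hmarg : ∀ i : Fin N, P (Δ i ⁻¹' S i) = gaussianReal 0 v (S i) := by
    intro i
    have h0 : (0:ℝ) ≤ ((i:ℕ):ℝ) * T / N := by positivity
    have hle : ((i:ℕ):ℝ) * T / N ≤ (((i:ℕ):ℝ)+1) * T / N := by
      have h2 : (0:ℝ) ≤ T / N := hh0.le
      rw [mul_div_assoc, mul_div_assoc]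
      nlinarith
    have hleT : (((i:ℕ):ℝ)+1) * T / N ≤ T := by
      have := hgrid (((i:ℕ):ℝ)+1) (by positivity)
        (by exact_mod_cast Nat.succ_le_of_lt i.is_lt)
      exact this.2
    have hmap := hWmap _ _ h0 hle hleT
    have hdiff : (((i:ℕ):ℝ)+1) * T / N - ((i:ℕ):ℝ) * T / N = T / N := by ring
    rw [hdiff] at hmap
    rw [← hv_def] at hmap
    rw [← Measure.map_apply (hΔmeas i) (hSmeas i)]
    rw [hΔ_def]
    rw [hmap]
  -- factor bounds
  have hC0pos : (0:ℝ) < (Real.sqrt (2*Real.pi*T))⁻¹ := by positivity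
  have hrsq : r^2 = Real.exp ((N:ℝ)/2) := by
    rw [hr_def, ← Real.exp_nat_mul]
    congr 1; push_cast; ring
  set b₀ : ℝ := (Real.sqrt (2*Real.pi*T))⁻¹ * Real.exp (-(2*Real.exp ((N:ℝ)/2)*(N:ℝ)/T))
    with hb₀_def
  have hb₀0 : 0 ≤ b₀ := by positivity
  have hfac0 : ENNReal.ofReal b₀ ≤ gaussianReal 0 v (Set.Ici r) := by
    refine le_trans ?_ (gauss_Ici_lower hv (by linarith : (0:ℝ) ≤ r))
    apply ENNReal.ofReal_le_ofReal
    have hsq : Real.sqrt (2*Real.pi*(v:ℝ)) ≤ Real.sqrt (2*Real.pi*T) := by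
      apply Real.sqrt_le_sqrt; rw [hvv]; nlinarith [Real.pi_pos]
    have hinv : (Real.sqrt (2*Real.pi*T))⁻¹ ≤ (Real.sqrt (2*Real.pi*(v:ℝ)))⁻¹ :=
      inv_anti₀ (by positivity) hsq
    have hexp : Real.exp (-(2*Real.exp ((N:ℝ)/2)*(N:ℝ)/T)) ≤ Real.exp (-(r+1)^2/(2*(v:ℝ))) := by
      apply Real.exp_le_exp.mpr
      rw [hvv, neg_div, neg_le_neg_iff, div_le_iff₀ (by positivity)]
      have hid : 2*Real.exp ((N:ℝ)/2)*(N:ℝ)/T * (2*(T/(N:ℝ))) = 4*Real.exp ((N:ℝ)/2) := by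
        field_simp; ring
      rw [hid]
      nlinarith [hrsq, hr1]
    exact mul_le_mul hinv hexp (Real.exp_nonneg _) (by positivity)
  have hfac1 : ENNReal.ofReal (Real.exp (-2)) ≤ gaussianReal 0 v (Set.Icc (-1) 1) := by
    refine le_trans ?_ (gauss_Icc11_lower hv (by rw [hvv]; exact hh1))
    apply ENNReal.ofReal_le_ofReal
    have hsqpos : (0:ℝ) < Real.sqrt (2*Real.pi) := by positivity
    have hsqrtle : Real.sqrt (2*Real.pi) ≤ Real.exp (3/2) := by
      rw [show (3:ℝ)/2 = 3/2 from rfl, Real.exp_half]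
      apply Real.sqrt_le_sqrt
      have he3 : Real.exp 3 = Real.exp 1 * Real.exp 1 * Real.exp 1 := by
        rw [← Real.exp_add, ← Real.exp_add]; norm_num
      nlinarith [Real.pi_lt_d2, Real.exp_one_gt_d9]
    rw [le_div_iff₀ hsqpos]
    have h1 : Real.exp (-2) * Real.sqrt (2*Real.pi) ≤ Real.exp (-2) * Real.exp (3/2) :=
      mul_le_mul_of_nonneg_left hsqrtle (Real.exp_nonneg _)
    have h2 : Real.exp (-2) * Real.exp (3/2) = Real.exp (-2⁻¹) := by
      rw [← Real.exp_add]; norm_num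
    linarith
  -- product assembly
  have : NeZero N := ⟨by omega⟩
  set i₀ : Fin N := ⟨0, by omega⟩ with hi₀_def
  have hprod : ENNReal.ofReal b₀ * ENNReal.ofReal (Real.exp (-2)) ^ (N-1) ≤ P A := by
    rw [hPA, ← Finset.mul_prod_erase Finset.univ _ (Finset.mem_univ i₀)]
    apply mul_le_mul'
    · rw [hmarg i₀]
      have hSi₀ : S i₀ = Set.Ici r := by simp [hS_def, hi₀_def]
      rw [hSi₀]; exact hfac0
    · have hcard : (Finset.univ.erase i₀).card = N - 1 := by
        rw [Finset.card_erase_of_mem (Finset.mem_univ _), Finset.card_univ, Fintype.card_fin]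
      calc ENNReal.ofReal (Real.exp (-2)) ^ (N-1)
          = ∏ _i ∈ Finset.univ.erase i₀, ENNReal.ofReal (Real.exp (-2)) := by
            rw [Finset.prod_const, hcard]
        _ ≤ ∏ i ∈ Finset.univ.erase i₀, P (Δ i ⁻¹' S i) := by
            apply Finset.prod_le_prod'
            intro i hi
            have hine : (i:ℕ) ≠ 0 := by
              intro h
              exact (Finset.mem_erase.mp hi).1 (Fin.ext (by simp [h, hi₀_def]))
            rw [hmarg i]
            have hSi : S i = Set.Icc (-1) 1 := by simp only [hS_def, if_neg hine]
            rw [hSi]; exact hfac1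
  have hPAlower : ENNReal.ofReal ((Real.sqrt (2*Real.pi*T))⁻¹
      * Real.exp (-(2*Real.exp ((N:ℝ)/2)*(N:ℝ)/T) - 2*(N:ℝ))) ≤ P A := by
    refine le_trans ?_ hprod
    rw [← ENNReal.ofReal_pow (Real.exp_nonneg _), ← ENNReal.ofReal_mul hb₀0]
    apply ENNReal.ofReal_le_ofReal
    have hx : Real.exp (-2:ℝ)^(N-1) = Real.exp (((N-1:ℕ):ℝ)*(-2)) :=
      (Real.exp_nat_mul _ _).symm
    have hcast : ((N-1:ℕ):ℝ) = (N:ℝ) - 1 := by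
      rw [Nat.cast_sub hN1]; norm_num
    rw [hx, hb₀_def]
    calc (Real.sqrt (2*Real.pi*T))⁻¹ * Real.exp (-(2*Real.exp ((N:ℝ)/2)*(N:ℝ)/T) - 2*(N:ℝ))
        ≤ (Real.sqrt (2*Real.pi*T))⁻¹
            * Real.exp (-(2*Real.exp ((N:ℝ)/2)*(N:ℝ)/T) + ((N-1:ℕ):ℝ)*(-2)) := by
          apply mul_le_mul_of_nonneg_left _ hC0pos.le
          apply Real.exp_le_exp.mpr
          rw [hcast]; linarith
      _ = _ := by rw [Real.exp_add, ← mul_assoc]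
  -- pathwise lower bound on A
  have hpath : ∀ ω ∈ A, Real.exp ((N:ℝ)/8 * 2^(N-1)) ≤ |Y N N ω| ^ p := by
    intro ω hω
    have hmem : ∀ i : Fin N, Δ i ω ∈ S i := by
      simpa [hA_def, Set.mem_iInter] using hω
    set d : ℕ → ℝ := fun k => if h : k < N then Δ ⟨k, h⟩ ω else 0 with hd_def
    have hd0 : r ≤ d 0 := by
      have h := hmem ⟨0, by omega⟩
      simp only [hS_def] at h
      simp only [hd_def]
      rw [dif_pos (show 0 < N by omega)]
      simpa using h
    have hdk : ∀ k, 1 ≤ k → k < N → |d k| ≤ 1 := by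
      intro k hk1 hkN
      have h := hmem ⟨k, hkN⟩
      have hne : ¬((⟨k, hkN⟩ : Fin N) : ℕ) = 0 := by simp; omega
      simp only [hS_def, if_neg hne] at h
      simp only [hd_def]
      rw [dif_pos hkN]
      exact abs_le.mpr ⟨h.1, h.2⟩
    have hyrec : ∀ k, k < N → Y N (k+1) ω
        = Y N k ω + (T/(N:ℝ))*(c*Y N k ω - lam*(Y N k ω)^2) + σ * Y N k ω * d k := by
      intro k hkN
      rw [hYrec N hN1 k hkN ω]
      have hdval : d k = W (((k:ℝ) + 1) * T / N) ω - W ((k:ℝ) * T / N) ω := by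
        simp only [hd_def]; rw [dif_pos hkN]
      rw [hdval]
    exact pathwise T lam σ x₀ c hT hlam hσ hx₀ hc N hN1 p r hp hr1 hTN hev3 hev5 hev6 hev7
      (fun k => Y N k ω) d (hY0 N hN1 ω) hyrec hd0 hdk
  -- integral chain
  calc ENNReal.ofReal (Real.exp ((N:ℝ)/8 * 2^(N-1))
      * ((Real.sqrt (2*Real.pi*T))⁻¹
        * Real.exp (-(2*Real.exp ((N:ℝ)/2)*(N:ℝ)/T) - 2*(N:ℝ))))
      = ENNReal.ofReal (Real.exp ((N:ℝ)/8 * 2^(N-1)))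
        * ENNReal.ofReal ((Real.sqrt (2*Real.pi*T))⁻¹
          * Real.exp (-(2*Real.exp ((N:ℝ)/2)*(N:ℝ)/T) - 2*(N:ℝ))) :=
        ENNReal.ofReal_mul (Real.exp_nonneg _)
    _ ≤ ENNReal.ofReal (Real.exp ((N:ℝ)/8 * 2^(N-1))) * P A := mul_le_mul' le_rfl hPAlower
    _ = ∫⁻ _ω in A, ENNReal.ofReal (Real.exp ((N:ℝ)/8 * 2^(N-1))) ∂P := by
        rw [setLIntegral_const]
    _ ≤ ∫⁻ ω in A, ENNReal.ofReal (|Y N N ω| ^ p) ∂P :=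
        setLIntegral_mono' hAmeas fun ω hω => ENNReal.ofReal_le_ofReal (hpath ω hω)
    _ ≤ ∫⁻ ω, ENNReal.ofReal (|Y N N ω| ^ p) ∂P := setLIntegral_le_lintegral _ _


end MainBound



end Stmt18Aux
end

theorem stmt_18 {Ω : Type*} [MeasurableSpace Ω] (P : MeasureTheory.Measure Ω)
    [MeasureTheory.IsProbabilityMeasure P]
    (T : ℝ) (hT : 0 < T)
    (η lam σ : ℝ) (hη : 0 < η) (hlam : 0 < lam) (hσ : 0 < σ) (x₀ : ℝ) (hx₀ : 0 < x₀)
    (W : ℝ → Ω → ℝ) (hW : IsStandardBrownianMotion P T W)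
    (Y : ℕ → ℕ → Ω → ℝ)
    (hY0 : ∀ N, 1 ≤ N → ∀ ω, Y N 0 ω = x₀)
    (hYrec : ∀ N, 1 ≤ N → ∀ k < N, ∀ ω,
      Y N (k + 1) ω = Y N k ω + (T / N) * ((η + σ ^ 2 / 2) * Y N k ω - lam * (Y N k ω) ^ 2)
        + σ * Y N k ω * (W (((k : ℝ) + 1) * T / N) ω - W ((k : ℝ) * T / N) ω)) :
    ∀ p : ℝ, 1 ≤ p →
      Tendsto (fun N : ℕ => ∫⁻ ω, ENNReal.ofReal (|Y N N ω| ^ p) ∂(P : MeasureTheory.Measure Ω)) atTop (nhds ⊤) := by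
  obtain ⟨hWmeas, hW0, hWcont, hWmap, hWind⟩ := hW
  intro p hp
  have hFT := Stmt18Aux.F_tendsto (T := T) hT
  have hev : ∀ᶠ N : ℕ in atTop,
      ENNReal.ofReal (Real.exp ((N:ℝ)/8 * 2^(N-1))
        * ((Real.sqrt (2*Real.pi*T))⁻¹
          * Real.exp (-(2*Real.exp ((N:ℝ)/2)*(N:ℝ)/T) - 2*(N:ℝ))))
        ≤ ∫⁻ ω, ENNReal.ofReal (|Y N N ω| ^ p) ∂P := by
    have h1 : ∀ᶠ N : ℕ in atTop, 1 ≤ N := eventually_ge_atTop 1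
    have h2 : ∀ᶠ N : ℕ in atTop, T ≤ (N:ℝ) :=
      tendsto_natCast_atTop_atTop.eventually_ge_atTop T
    have h3 : ∀ᶠ N : ℕ in atTop,
        2*(1 + T*((η + σ^2/2) + lam*x₀)) ≤ σ * Real.exp ((N:ℝ)/4) := by
      have ht : Tendsto (fun N : ℕ => σ * Real.exp ((N:ℝ)/4)) atTop atTop :=
        (Real.tendsto_exp_atTop.comp
          (tendsto_natCast_atTop_atTop.atTop_div_const (by norm_num))).const_mul_atTop hσ
      exact ht.eventually_ge_atTop _
    have h6 : ∀ᶠ N : ℕ in atTop,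
        max (1 + T*(η + σ^2/2) + σ) 2 ≤ Real.exp ((N:ℝ)/8) := by
      have ht : Tendsto (fun N : ℕ => Real.exp ((N:ℝ)/8)) atTop atTop :=
        Real.tendsto_exp_atTop.comp
          (tendsto_natCast_atTop_atTop.atTop_div_const (by norm_num))
      exact ht.eventually_ge_atTop _
    have h7 : ∀ᶠ N : ℕ in atTop, T*lam/2 ≤ (N:ℝ) :=
      tendsto_natCast_atTop_atTop.eventually_ge_atTop _
    have h5 : ∀ᶠ N : ℕ in atTop,
        Real.exp ((N:ℝ)/8) ≤ T*lam*σ*x₀/(4*(N:ℝ)) * Real.exp ((N:ℝ)/4) := by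
      set c₁ : ℝ := T*lam*σ*x₀/4 with hc₁
      have hc₁0 : 0 < c₁ := by positivity
      have hcomp : Tendsto (fun N : ℕ => Real.exp ((N:ℝ)/8) / ((N:ℝ)/8)) atTop atTop := by
        have ht := (Real.tendsto_exp_div_pow_atTop 1).comp
          (tendsto_natCast_atTop_atTop.atTop_div_const (show (0:ℝ) < 8 by norm_num))
        simpa [Function.comp_def, pow_one] using ht
      filter_upwards [hcomp.eventually_ge_atTop (8/c₁), eventually_ge_atTop 1] with N hN8 hN1
      have hx0 : (0:ℝ) < (N:ℝ) := by exact_mod_cast Nat.pos_of_ne_zero (by omega)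
      have h8 : (0:ℝ) < (N:ℝ)/8 := by positivity
      have hA : (N:ℝ)/c₁ ≤ Real.exp ((N:ℝ)/8) := by
        have hmul := (le_div_iff₀ h8).mp hN8
        calc (N:ℝ)/c₁ = 8/c₁ * ((N:ℝ)/8) := by ring
          _ ≤ _ := hmul
      have hEq4 : Real.exp ((N:ℝ)/4) = Real.exp ((N:ℝ)/8) * Real.exp ((N:ℝ)/8) := by
        rw [← Real.exp_add]; ring_nf
      have hgoal : T*lam*σ*x₀/(4*(N:ℝ)) * Real.exp ((N:ℝ)/4)
          = c₁/(N:ℝ) * Real.exp ((N:ℝ)/8) * Real.exp ((N:ℝ)/8) := by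
        rw [hEq4, hc₁]; ring
      rw [hgoal]
      have hc₁x : (0:ℝ) < c₁/(N:ℝ) := by positivity
      have key := mul_le_mul_of_nonneg_right
        (mul_le_mul_of_nonneg_left hA hc₁x.le) (Real.exp_nonneg ((N:ℝ)/8))
      have hone : c₁/(N:ℝ) * ((N:ℝ)/c₁) = 1 := by field_simp
      rw [hone, one_mul] at key
      exact key
    filter_upwards [h1, h2, h3, h5, h6, h7] with N hN1 hN2 hN3 hN5 hN6 hN7
    exact Stmt18Aux.main_bound P T hT η lam σ hη hlam hσ x₀ hx₀ W hWmeas hWmap hWind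
      Y hY0 hYrec p hp N hN1 hN2 hN3 hN5 hN6 hN7
  apply ENNReal.tendsto_nhds_top
  intro n
  filter_upwards [hev, hFT.eventually_gt_atTop (n:ℝ)] with N h1 h2
  refine lt_of_lt_of_le ?_ h1
  calc (n : ENNReal) = ENNReal.ofReal (n:ℝ) := (ENNReal.ofReal_natCast n).symm
    _ < _ := (ENNReal.ofReal_lt_ofReal_iff
        (lt_of_le_of_lt (Nat.cast_nonneg n) h2)).mpr h2
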